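/- Let d : ℕ → ℝ_{≥0} be a family of functions d_n : [0,1] → ℝ_{≥0} satisfying d_n(α) ≤ D^n for all α ∈ [0,1] (where D ≥ 1 is a constant), and d_n(α) ≤ d_n(0) + C ∫_0^α d_{n+m}(β) dβ for constants C ≥ 0 and m ∈ ℕ. Define, for 0 < a < 1/D, g(a, α) = Σ_{n ≥ 0} d_n(α) a^n. Then for all α ∈ [0,1], g(a, α) ≤ g(a, 0) · e^{α C a^{-m}}. -/

import Mathlib

open MeasureTheory Set intervalIntegral

private lemma int_aux (C c α : ℝ) (j : ℕ) :
    C * ∫ β in (0:ℝ)..α, (C*β)^j / (j.factorial : ℝ) * c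
      = (C*α)^(j+1) / ((j+1).factorial : ℝ) * c := by
  have h : ∀ β : ℝ, (C*β)^j / (j.factorial:ℝ) * c = (C^j / j.factorial * c) * β^j := by
    intro β; rw [mul_pow]; ring
  simp_rw [h]
  rw [intervalIntegral.integral_const_mul, integral_pow]
  have hj : (j.factorial : ℝ) ≠ 0 := Nat.cast_ne_zero.2 j.factorial_ne_zero
  have hj1 : ((j:ℝ)+1) ≠ 0 := by positivity
  rw [Nat.factorial_succ, mul_pow]
  push_cast
  field_simp
  ring

private lemma iter_aux (d : ℕ → ℝ → ℝ) (D C : ℝ) (m : ℕ) (hD : 1 ≤ D) (hC : 0 ≤ C)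
    (hpos : ∀ n, ∀ α ∈ Icc (0:ℝ) 1, 0 ≤ d n α)
    (hbound : ∀ n, ∀ α ∈ Icc (0:ℝ) 1, d n α ≤ D ^ n)
    (hrec : ∀ n, ∀ α ∈ Icc (0:ℝ) 1,
      d n α ≤ d n 0 + C * ∫ β in (0:ℝ)..α, d (n + m) β) :
    ∀ k n, ∀ α ∈ Icc (0:ℝ) 1,
      d n α ≤ (∑ j ∈ Finset.range k, (C*α)^j / (j.factorial : ℝ) * d (n + j*m) 0)
        + (C*α)^k / (k.factorial : ℝ) * D^(n + k*m) := by
  have h01 : (0:ℝ) ∈ Icc (0:ℝ) 1 := ⟨le_refl _, zero_le_one⟩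
  intro k
  induction k with
  | zero =>
    intro n α hα
    simpa using hbound n α hα
  | succ k IH =>
    intro n α hα
    obtain ⟨hα0, hα1⟩ := hα
    set G : ℝ → ℝ := fun β =>
      (∑ j ∈ Finset.range k, (C*β)^j / (j.factorial : ℝ) * d (n + m + j*m) 0)
        + (C*β)^k / (k.factorial : ℝ) * D^(n + m + k*m) with hG
    have hc1 : Continuous (fun β : ℝ =>
        ∑ j ∈ Finset.range k, (C*β)^j / (j.factorial : ℝ) * d (n + m + j*m) 0) :=
      continuous_finset_sum _ fun j _ => by fun_prop
    have hGc : Continuous G := hc1.add (by fun_prop)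
    have hGnonneg : ∀ β ∈ Icc (0:ℝ) α, 0 ≤ G β := by
      intro β hβ
      have hβ0 : 0 ≤ β := hβ.1
      apply add_nonneg
      · apply Finset.sum_nonneg
        intro j _
        exact mul_nonneg (div_nonneg (pow_nonneg (mul_nonneg hC hβ0) _) (by positivity))
          (hpos _ 0 h01)
      · have hD0 : (0:ℝ) ≤ D := le_trans zero_le_one hD
        positivity
    have hint : (∫ β in (0:ℝ)..α, d (n + m) β) ≤ ∫ β in (0:ℝ)..α, G β := by
      by_cases hd : IntervalIntegrable (d (n+m)) volume 0 α
      · apply intervalIntegral.integral_mono_on hα0 hd (hGc.intervalIntegrable _ _)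
        intro β hβ
        exact IH (n+m) β ⟨hβ.1, hβ.2.trans hα1⟩
      · rw [intervalIntegral.integral_undef hd]
        exact intervalIntegral.integral_nonneg hα0 hGnonneg
    have hstep : d n α ≤ d n 0 + C * ∫ β in (0:ℝ)..α, G β := by
      refine (hrec n α ⟨hα0, hα1⟩).trans ?_
      exact add_le_add_right (mul_le_mul_of_nonneg_left hint hC) _
    -- compute the integral of G
    have hterm : ∀ j : ℕ, IntervalIntegrable
        (fun β => (C*β)^j / (j.factorial : ℝ) * d (n + m + j*m) 0) volume 0 α := by
      intro j
      exact (by fun_prop : Continuous fun β : ℝ =>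
        (C*β)^j / (j.factorial : ℝ) * d (n + m + j*m) 0).intervalIntegrable _ _
    have hIG : C * (∫ β in (0:ℝ)..α, G β)
        = (∑ j ∈ Finset.range k, (C*α)^(j+1) / ((j+1).factorial : ℝ) * d (n + m + j*m) 0)
          + (C*α)^(k+1) / ((k+1).factorial : ℝ) * D^(n + m + k*m) := by
      rw [hG]
      beta_reduce
      rw [intervalIntegral.integral_add
        (hc1.intervalIntegrable _ _)
        ((by fun_prop : Continuous fun β : ℝ =>
          (C*β)^k / (k.factorial : ℝ) * D^(n + m + k*m)).intervalIntegrable _ _)]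
      rw [intervalIntegral.integral_finset_sum fun j _ => hterm j]
      rw [mul_add, Finset.mul_sum]
      congr 1
      · exact Finset.sum_congr rfl fun j _ => int_aux C _ α j
      · exact int_aux C _ α k
    rw [hIG] at hstep
    refine hstep.trans (le_of_eq ?_)
    have e1 : ∀ j : ℕ, n + m + j*m = n + (j+1)*m := by intro j; ring
    have e2 : n + m + k*m = n + (k+1)*m := by ring
    have hsum_eq : d n 0 + ∑ j ∈ Finset.range k,
          (C*α)^(j+1)/((j+1).factorial:ℝ) * d (n+m+j*m) 0
        = ∑ j ∈ Finset.range (k+1), (C*α)^j/(j.factorial:ℝ) * d (n+j*m) 0 := by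
      rw [Finset.sum_range_succ', add_comm]
      congr 1
      · exact Finset.sum_congr rfl fun j _ => by rw [← e1 j]
      · simp
    rw [← add_assoc, hsum_eq, e2]

theorem stmt_12 (d : ℕ → ℝ → ℝ) (D C : ℝ) (m : ℕ) (hD : 1 ≤ D) (hC : 0 ≤ C)
    (hpos : ∀ n, ∀ α ∈ Icc (0:ℝ) 1, 0 ≤ d n α)
    (hbound : ∀ n, ∀ α ∈ Icc (0:ℝ) 1, d n α ≤ D ^ n)
    (hrec : ∀ n, ∀ α ∈ Icc (0:ℝ) 1,
      d n α ≤ d n 0 + C * ∫ β in (0:ℝ)..α, d (n + m) β)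
    (a : ℝ) (ha : 0 < a) (haD : a < 1 / D) :
    ∀ α ∈ Icc (0:ℝ) 1,
      (∑' n : ℕ, d n α * a ^ n) ≤
        (∑' n : ℕ, d n 0 * a ^ n) * Real.exp (α * C / a ^ m) := by
  intro α hα
  obtain ⟨hα0, hα1⟩ := hα
  have h01 : (0:ℝ) ∈ Icc (0:ℝ) 1 := ⟨le_refl _, zero_le_one⟩
  have hD0 : (0:ℝ) < D := lt_of_lt_of_le one_pos hD
  have haD1 : D * a < 1 := by
    rw [lt_div_iff₀ hD0] at haD; linarith
  have hgeo : Summable (fun n : ℕ => (D*a)^n) :=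
    summable_geometric_of_lt_one (by positivity) haD1
  -- summability of the series at any point of [0,1]
  have hsum : ∀ γ ∈ Icc (0:ℝ) 1, Summable (fun n : ℕ => d n γ * a^n) := by
    intro γ hγ
    refine Summable.of_nonneg_of_le (fun n => mul_nonneg (hpos n γ hγ) (by positivity))
      (fun n => ?_) hgeo
    rw [mul_pow]
    exact mul_le_mul_of_nonneg_right (hbound n γ hγ) (by positivity)
  set S0 : ℝ := ∑' n : ℕ, d n 0 * a ^ n with hS0
  have hS0nonneg : 0 ≤ S0 :=
    tsum_nonneg fun n => mul_nonneg (hpos n 0 h01) (by positivity)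
  have hCα : 0 ≤ C * α := mul_nonneg hC hα0
  -- shifted sums are bounded by S0 / a^(j*m)
  have hshift : ∀ j : ℕ, (∑' n : ℕ, d (n + j*m) 0 * a ^ n) ≤ S0 / a^(j*m) := by
    intro j
    have hsub : Summable (fun n : ℕ => d (n + j*m) 0 * a ^ (n + j*m)) :=
      ((hsum 0 h01).comp_injective (add_left_injective (j*m)))
    have h1 : a^(j*m) * (∑' n : ℕ, d (n + j*m) 0 * a ^ n)
        = ∑' n : ℕ, d (n + j*m) 0 * a ^ (n + j*m) := by
      rw [← tsum_mul_left]
      congr 1; funext n; rw [pow_add]; ring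
    have h2 : (∑' n : ℕ, d (n + j*m) 0 * a ^ (n + j*m)) ≤ S0 := by
      apply Summable.tsum_le_tsum_of_inj (fun n : ℕ => n + j*m) (add_left_injective (j*m))
        (fun c _ => mul_nonneg (hpos c 0 h01) (by positivity))
        (fun n => le_refl _) hsub (hsum 0 h01)
    rw [le_div_iff₀ (by positivity), mul_comm]
    rw [h1]; exact h2
  have hsummable_shift : ∀ j : ℕ, Summable (fun n : ℕ => d (n + j*m) 0 * a ^ n) := by
    intro j
    refine Summable.of_nonneg_of_le (fun n => mul_nonneg (hpos _ 0 h01) (by positivity))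
      (fun n => ?_) (hgeo.mul_left (D^(j*m)))
    calc d (n + j*m) 0 * a ^ n ≤ D^(n+j*m) * a^n :=
          mul_le_mul_of_nonneg_right (hbound _ 0 h01) (by positivity)
      _ = D^(j*m) * (D*a)^n := by rw [pow_add, mul_pow]; ring
  -- the key estimate for each k
  have key : ∀ k : ℕ, (∑' n : ℕ, d n α * a^n) ≤
      S0 * Real.exp (α * C / a ^ m) + (C*α*D^m)^k / (k.factorial : ℝ) * (1-D*a)⁻¹ := by
    intro k
    set u : ℕ → ℕ → ℝ := fun j n => (C*α)^j / (j.factorial : ℝ) * (d (n + j*m) 0 * a^n)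
      with hu
    set v : ℕ → ℝ := fun n => ((C*α)^k / (k.factorial : ℝ) * D^(k*m)) * (D*a)^n with hv
    have husum : ∀ j, Summable (u j) := fun j => (hsummable_shift j).mul_left _
    have hvsum : Summable v := hgeo.mul_left _
    have hhsum : Summable (fun n => (∑ j ∈ Finset.range k, u j n) + v n) :=
      (summable_sum fun j _ => husum j).add hvsum
    have hpt : ∀ n : ℕ, d n α * a^n ≤ (∑ j ∈ Finset.range k, u j n) + v n := by
      intro n
      have := iter_aux d D C m hD hC hpos hbound hrec k n α ⟨hα0, hα1⟩
      have h3 := mul_le_mul_of_nonneg_right this (le_of_lt (pow_pos ha n))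
      refine h3.trans (le_of_eq ?_)
      rw [add_mul, Finset.sum_mul]
      congr 1
      · exact Finset.sum_congr rfl fun j _ => by rw [hu]; ring
      · rw [hv, pow_add, mul_pow]; ring
    have hle : (∑' n : ℕ, d n α * a^n) ≤ ∑' n, ((∑ j ∈ Finset.range k, u j n) + v n) :=
      Summable.tsum_le_tsum hpt (hsum α ⟨hα0, hα1⟩) hhsum
    refine hle.trans ?_
    rw [Summable.tsum_add (summable_sum fun j _ => husum j) hvsum,
      Summable.tsum_finsetSum (fun j _ => husum j)]
    have hterm : ∀ j ∈ Finset.range k, (∑' n, u j n) ≤ S0 * ((C*α/a^m)^j / (j.factorial : ℝ)) := by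
      intro j _
      rw [hu]
      simp only [tsum_mul_left]
      have := hshift j
      calc (C*α)^j / (j.factorial : ℝ) * (∑' n : ℕ, d (n + j*m) 0 * a ^ n)
          ≤ (C*α)^j / (j.factorial : ℝ) * (S0 / a^(j*m)) :=
            mul_le_mul_of_nonneg_left this (by positivity)
        _ = S0 * ((C*α/a^m)^j / (j.factorial : ℝ)) := by
            rw [div_pow, pow_mul]
            field_simp
            ring
    have hexp : (∑ j ∈ Finset.range k, (C*α/a^m)^j / (j.factorial : ℝ))
        ≤ Real.exp (C*α/a^m) := Real.sum_le_exp_of_nonneg (by positivity) k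
    have hsum1 : (∑ j ∈ Finset.range k, ∑' n, u j n) ≤ S0 * Real.exp (α * C / a ^ m) := by
      calc (∑ j ∈ Finset.range k, ∑' n, u j n)
          ≤ ∑ j ∈ Finset.range k, S0 * ((C*α/a^m)^j / (j.factorial : ℝ)) :=
            Finset.sum_le_sum hterm
        _ = S0 * (∑ j ∈ Finset.range k, (C*α/a^m)^j / (j.factorial : ℝ)) := by
            rw [Finset.mul_sum]
        _ ≤ S0 * Real.exp (C*α/a^m) := mul_le_mul_of_nonneg_left hexp hS0nonneg
        _ = S0 * Real.exp (α * C / a ^ m) := by rw [mul_comm C α]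
    have hsum2 : (∑' n, v n) = (C*α*D^m)^k / (k.factorial : ℝ) * (1-D*a)⁻¹ := by
      rw [hv, tsum_mul_left, tsum_geometric_of_lt_one (by positivity) haD1]
      rw [mul_pow, pow_mul]
      ring
    rw [hsum2]
    exact add_le_add_left hsum1 _
  -- let k → ∞
  have hlim : Filter.Tendsto
      (fun k : ℕ => S0 * Real.exp (α * C / a ^ m) + (C*α*D^m)^k / (k.factorial : ℝ) * (1-D*a)⁻¹)
      Filter.atTop (nhds (S0 * Real.exp (α * C / a ^ m))) := by
    have h := (FloorSemiring.tendsto_pow_div_factorial_atTop (C*α*D^m)).mul_const (1-D*a)⁻¹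
    have h2 := Filter.Tendsto.const_add (S0 * Real.exp (α * C / a ^ m)) h
    simpa using h2
  exact ge_of_tendsto' hlim key
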